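/- A bipartite state ρ on ℂ^{d₁} ⊗ ℂ^{d₂} is 1-UDA if and only if at least one of its two single-system marginals ρ_{A₁} = Tr_{A₂} ρ and ρ_{A₂} = Tr_{A₁} ρ is pure (has rank one). -/

import Mathlib

set_option linter.unusedSectionVars false
set_option linter.unusedVariables false
set_option maxHeartbeats 1000000


noncomputable section
open scoped Matrix ComplexOrder

/-- The first marginal `ρ_{A₁} = Tr_{A₂} ρ` of a bipartite matrix. -/
def margA {d₁ d₂ : ℕ} (ρ : Matrix (Fin d₁ × Fin d₂) (Fin d₁ × Fin d₂) ℂ) :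
    Matrix (Fin d₁) (Fin d₁) ℂ :=
  Matrix.of fun i j => ∑ k, ρ (i, k) (j, k)

/-- The second marginal `ρ_{A₂} = Tr_{A₁} ρ` of a bipartite matrix. -/
def margB {d₁ d₂ : ℕ} (ρ : Matrix (Fin d₁ × Fin d₂) (Fin d₁ × Fin d₂) ℂ) :
    Matrix (Fin d₂) (Fin d₂) ℂ :=
  Matrix.of fun k l => ∑ i, ρ (i, k) (i, l)

open Complex

namespace BPH

local notation "conj'" => starRingEnd ℂ

section general
variable {n : Type*} [Fintype n] [DecidableEq n]




/-- outer product -/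
def outer (ψ : n → ℂ) : Matrix n n ℂ := Matrix.of fun i j => ψ i * conj' (ψ j)

lemma outer_apply (ψ : n → ℂ) (i j : n) : outer ψ i j = ψ i * conj' (ψ j) := rfl

lemma quad_outer (ψ x : n → ℂ) :
    star x ⬝ᵥ (outer ψ *ᵥ x) = star (∑ j, conj' (ψ j) * x j) * (∑ j, conj' (ψ j) * x j) := by
  have h1 : star x ⬝ᵥ (outer ψ *ᵥ x) = ∑ i, ∑ j, star (x i) * (ψ i * conj' (ψ j) * x j) := by
    simp only [dotProduct, Matrix.mulVec, outer, Matrix.of_apply, Pi.star_apply,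
      Finset.mul_sum]
  have h2 : star (∑ j, conj' (ψ j) * x j) * (∑ j, conj' (ψ j) * x j)
      = ∑ i, ∑ j, star (x i) * (ψ i * conj' (ψ j) * x j) := by
    rw [star_sum, Finset.sum_mul_sum]
    refine Finset.sum_congr rfl fun i _ => Finset.sum_congr rfl fun j _ => ?_
    simp only [star_mul', starRingEnd_apply, star_star]
    ring
  rw [h1, h2]

lemma outer_posSemidef (ψ : n → ℂ) : (outer ψ).PosSemidef := by
  refine Matrix.PosSemidef.of_dotProduct_mulVec_nonneg ?_ ?_
  · ext i j
    simp [outer, Matrix.conjTranspose_apply, mul_comm]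
  · intro x
    rw [quad_outer]
    exact star_mul_self_nonneg _





section spectral
variable {A : Matrix n n ℂ} (hA : A.IsHermitian)

lemma col_orthonormal (s t : n) :
    ∑ i, conj' ((hA.eigenvectorUnitary : Matrix n n ℂ) i s)
      * (hA.eigenvectorUnitary : Matrix n n ℂ) i t = if s = t then 1 else 0 := by
  have h : (star (hA.eigenvectorUnitary : Matrix n n ℂ))
      * (hA.eigenvectorUnitary : Matrix n n ℂ) = 1 := by
    exact_mod_cast Unitary.coe_star_mul_self hA.eigenvectorUnitary
  have h2 : ((star (hA.eigenvectorUnitary : Matrix n n ℂ))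
      * (hA.eigenvectorUnitary : Matrix n n ℂ)) s t = (1 : Matrix n n ℂ) s t := by rw [h]
  rw [Matrix.mul_apply, Matrix.one_apply] at h2
  simp only [Matrix.star_apply, starRingEnd_apply] at h2 ⊢
  exact h2

lemma spec_apply (i j : n) :
    A i j = ∑ s, (hA.eigenvalues s : ℂ) *
      ((hA.eigenvectorUnitary : Matrix n n ℂ) i s
        * conj' ((hA.eigenvectorUnitary : Matrix n n ℂ) j s)) := by
  conv_lhs => rw [hA.spectral_theorem, Unitary.conjStarAlgAut_apply]
  simp only [Matrix.mul_apply, Matrix.mul_diagonal, Matrix.diagonal_apply, Matrix.star_apply,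
    Matrix.conjTranspose_apply, Function.comp_apply, starRingEnd_apply]
  refine Finset.sum_congr rfl fun s _ => ?_
  simp only [mul_ite, mul_zero, Finset.sum_ite_eq', Finset.mem_univ, if_true]
  rw [mul_right_comm, mul_comm]
  rfl

end spectral





lemma trace_eq_sum_eigs {A : Matrix n n ℂ} (hA : A.IsHermitian)
    (horth : ∀ s t : n, ∑ i, conj' ((hA.eigenvectorUnitary : Matrix n n ℂ) i s)
      * (hA.eigenvectorUnitary : Matrix n n ℂ) i t = if s = t then 1 else 0)
    (hspec : ∀ i j : n, A i j = ∑ s, (hA.eigenvalues s : ℂ) *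
      ((hA.eigenvectorUnitary : Matrix n n ℂ) i s
        * conj' ((hA.eigenvectorUnitary : Matrix n n ℂ) j s))) :
    A.trace = ↑(∑ s, hA.eigenvalues s) := by
  calc A.trace = ∑ i, A i i := rfl
    _ = ∑ i, ∑ s, (hA.eigenvalues s : ℂ) *
        ((hA.eigenvectorUnitary : Matrix n n ℂ) i s
          * conj' ((hA.eigenvectorUnitary : Matrix n n ℂ) i s)) :=
      Finset.sum_congr rfl fun i _ => hspec i i
    _ = ∑ s, (hA.eigenvalues s : ℂ) * ∑ i,
        conj' ((hA.eigenvectorUnitary : Matrix n n ℂ) i s)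
          * (hA.eigenvectorUnitary : Matrix n n ℂ) i s := by
      rw [Finset.sum_comm]
      refine Finset.sum_congr rfl fun s _ => ?_
      rw [Finset.mul_sum]
      exact Finset.sum_congr rfl fun i _ => by ring
    _ = ∑ s, (hA.eigenvalues s : ℂ) := by
      refine Finset.sum_congr rfl fun s _ => ?_
      rw [horth s s, if_pos rfl, mul_one]
    _ = ↑(∑ s, hA.eigenvalues s) := by push_cast; rfl

lemma span_helper (ψ h : n → ℂ) (hψ : ∑ i, conj' (ψ i) * ψ i = 1)
    (H : ∀ w : n → ℂ, (∑ i, conj' (ψ i) * w i = 0) → ∑ i, conj' (h i) * w i = 0) :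
    ∀ i, h i = (∑ j, conj' (ψ j) * h j) * ψ i := by
  set c := ∑ j, conj' (ψ j) * h j with hc
  set w : n → ℂ := fun i => h i - c * ψ i with hw
  have hw1 : ∑ i, conj' (ψ i) * w i = 0 := by
    have : ∀ i, conj' (ψ i) * w i = conj' (ψ i) * h i - c * (conj' (ψ i) * ψ i) := by
      intro i; simp only [hw]; ring
    rw [Finset.sum_congr rfl fun i _ => this i, Finset.sum_sub_distrib, ← Finset.mul_sum, hψ,
      mul_one, ← hc, sub_self]
  have hw2 := H w hw1
  have key : ∑ i, conj' (w i) * w i = 0 := by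
    have : ∀ i, conj' (w i) * w i = conj' (h i) * w i - conj' c * (conj' (ψ i) * w i) := by
      intro i; simp only [hw, map_sub, map_mul]; ring
    rw [Finset.sum_congr rfl fun i _ => this i, Finset.sum_sub_distrib, hw2, ← Finset.mul_sum,
      hw1, mul_zero, sub_self]
  have hterm : ∀ i ∈ Finset.univ, (0:ℂ) ≤ conj' (w i) * w i := by
    intro i _
    rw [starRingEnd_apply]
    exact star_mul_self_nonneg (w i)
  have hzero := (Finset.sum_eq_zero_iff_of_nonneg hterm).mp key
  intro i
  have hi := hzero i (Finset.mem_univ i)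
  have hwi : w i = 0 := by
    rcases mul_eq_zero.mp hi with h0 | h0
    · rw [starRingEnd_apply] at h0
      exact star_eq_zero.mp h0
    · exact h0
  have := sub_eq_zero.mp (by simpa [hw] using hwi)
  rw [this, hc]

lemma posSemidef_sum {ι : Type*} (s : Finset ι) (f : ι → Matrix n n ℂ)
    (h : ∀ i ∈ s, (f i).PosSemidef) : (∑ i ∈ s, f i).PosSemidef := by
  induction s using Finset.cons_induction with
  | empty => simpa using (Matrix.PosSemidef.zero (n := n) (R := ℂ))
  | cons a s ha ih =>
    rw [Finset.sum_cons]
    exact (h a (Finset.mem_cons_self a s)).add (ih fun i hi => h i (Finset.mem_cons_of_mem hi))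


lemma exists_unit_outer {A : Matrix n n ℂ} (hA : A.PosSemidef)
    (htr : A.trace = 1) (hr : A.rank = 1) :
    ∃ ψ : n → ℂ, (∑ i, conj' (ψ i) * ψ i = 1) ∧ A = outer ψ := by
  have h1 := hA.1
  have hcard : Fintype.card {s // h1.eigenvalues s ≠ 0} = 1 := by
    rw [← h1.rank_eq_card_non_zero_eigs]; exact hr
  obtain ⟨⟨s₀, hs₀⟩, huniq⟩ := Fintype.card_eq_one_iff.mp hcard
  have hzero : ∀ s, s ≠ s₀ → h1.eigenvalues s = 0 := by
    intro s hs
    by_contra hne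
    exact hs (congrArg Subtype.val (huniq ⟨s, hne⟩))
  have htr' : (h1.eigenvalues s₀ : ℂ) = 1 := by
    have h2 := trace_eq_sum_eigs h1 (col_orthonormal h1) (spec_apply h1)
    rw [htr] at h2
    have hsum : ∑ s, h1.eigenvalues s = h1.eigenvalues s₀ :=
      Finset.sum_eq_single s₀ (fun s _ hs => hzero s hs) (by simp)
    rw [hsum] at h2
    exact_mod_cast h2.symm
  refine ⟨fun i => (h1.eigenvectorUnitary : Matrix n n ℂ) i s₀, ?_, ?_⟩
  · have h3 := col_orthonormal h1 s₀ s₀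
    rw [if_pos rfl] at h3
    exact h3
  · ext i j
    rw [spec_apply h1 i j, outer_apply]
    rw [Finset.sum_eq_single s₀ (fun s _ hs => by rw [hzero s hs]; simp) (by simp)]
    rw [htr', one_mul]

lemma exists_two_pos_eigs {A : Matrix n n ℂ} (hA : A.PosSemidef) (htr : A.trace = 1)
    (hr : A.rank ≠ 1) :
    ∃ s₁ s₂, s₁ ≠ s₂ ∧ 0 < hA.1.eigenvalues s₁ ∧ 0 < hA.1.eigenvalues s₂ := by
  have h1 := hA.1
  have hne : ∃ s, h1.eigenvalues s ≠ 0 := by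
    by_contra hall
    push_neg at hall
    have h2 := trace_eq_sum_eigs h1 (col_orthonormal h1) (spec_apply h1)
    rw [htr] at h2
    rw [Finset.sum_eq_zero fun s _ => hall s] at h2
    norm_num at h2
  have hcard : 1 < Fintype.card {s // h1.eigenvalues s ≠ 0} := by
    have hpos : 0 < Fintype.card {s // h1.eigenvalues s ≠ 0} := by
      obtain ⟨s, hs⟩ := hne
      exact Fintype.card_pos_iff.mpr ⟨⟨s, hs⟩⟩
    have hne1 : Fintype.card {s // h1.eigenvalues s ≠ 0} ≠ 1 := by
      rw [← h1.rank_eq_card_non_zero_eigs]; exact hr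
    omega
  obtain ⟨x, y, hxy⟩ := Fintype.one_lt_card_iff.mp hcard
  exact ⟨x.1, y.1, fun h => hxy (Subtype.ext h),
    lt_of_le_of_ne (hA.eigenvalues_nonneg x.1) (Ne.symm x.2),
    lt_of_le_of_ne (hA.eigenvalues_nonneg y.1) (Ne.symm y.2)⟩

end general

section bipartite



variable {d₁ d₂ : ℕ}

/-- embedding of a vector on the first factor, supported at column `k` -/
def emb1 (x : Fin d₁ → ℂ) (k : Fin d₂) : Fin d₁ × Fin d₂ → ℂ :=
  fun p => if p.2 = k then x p.1 else 0

lemma quad_emb1 (ρ : Matrix (Fin d₁ × Fin d₂) (Fin d₁ × Fin d₂) ℂ) (x : Fin d₁ → ℂ)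
    (k : Fin d₂) :
    star (emb1 x k) ⬝ᵥ (ρ *ᵥ emb1 x k) = ∑ i, ∑ j, star (x i) * (ρ (i,k) (j,k) * x j) := by
  simp only [dotProduct, Matrix.mulVec, emb1, Pi.star_apply, Fintype.sum_prod_type,
    mul_ite, mul_zero, apply_ite (star : ℂ → ℂ), star_zero, ite_mul, zero_mul,
    Finset.sum_ite_irrel, Finset.sum_const_zero,
    Finset.sum_ite_eq', Finset.mem_univ, if_true, Finset.mul_sum]

lemma margA_quad (ρ : Matrix (Fin d₁ × Fin d₂) (Fin d₁ × Fin d₂) ℂ) (x : Fin d₁ → ℂ) :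
    star x ⬝ᵥ (margA ρ *ᵥ x) = ∑ k, star (emb1 x k) ⬝ᵥ (ρ *ᵥ emb1 x k) := by
  have L : star x ⬝ᵥ (margA ρ *ᵥ x)
      = ∑ i, ∑ j, ∑ k, star (x i) * (ρ (i,k) (j,k) * x j) := by
    simp only [dotProduct, Matrix.mulVec, margA, Matrix.of_apply, Pi.star_apply,
      Finset.sum_mul, Finset.mul_sum]
  rw [L]
  rw [show (∑ i, ∑ j, ∑ k, star (x i) * (ρ (i,k) (j,k) * x j))
      = ∑ i, ∑ k, ∑ j, star (x i) * (ρ (i,k) (j,k) * x j) from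
    Finset.sum_congr rfl fun i _ => Finset.sum_comm]
  rw [Finset.sum_comm]
  exact Finset.sum_congr rfl fun k _ => (quad_emb1 ρ x k).symm

lemma margA_posSemidef {ρ : Matrix (Fin d₁ × Fin d₂) (Fin d₁ × Fin d₂) ℂ}
    (h : ρ.PosSemidef) : (margA ρ).PosSemidef := by
  refine Matrix.PosSemidef.of_dotProduct_mulVec_nonneg ?_ ?_
  · ext i j
    simp only [Matrix.conjTranspose_apply, margA, Matrix.of_apply, star_sum]
    refine Finset.sum_congr rfl fun k _ => ?_
    exact Matrix.IsHermitian.apply h.1 (i,k) (j,k)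
  · intro x
    rw [margA_quad]
    exact Finset.sum_nonneg fun k _ => h.dotProduct_mulVec_nonneg _

lemma trace_margA (ρ : Matrix (Fin d₁ × Fin d₂) (Fin d₁ × Fin d₂) ℂ) :
    (margA ρ).trace = ρ.trace := by
  simp only [Matrix.trace, Matrix.diag, margA, Matrix.of_apply, Fintype.sum_prod_type]

lemma trace_margB (ρ : Matrix (Fin d₁ × Fin d₂) (Fin d₁ × Fin d₂) ℂ) :
    (margB ρ).trace = ρ.trace := by
  simp only [Matrix.trace, Matrix.diag, margB, Matrix.of_apply, Fintype.sum_prod_type]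
  exact Finset.sum_comm


variable {ρ : Matrix (Fin d₁ × Fin d₂) (Fin d₁ × Fin d₂) ℂ}

lemma mulVec_emb1_eq_zero (hρ : ρ.PosSemidef) {ψ : Fin d₁ → ℂ} (hm : margA ρ = outer ψ)
    {w : Fin d₁ → ℂ} (hw : ∑ i, conj' (ψ i) * w i = 0) (k : Fin d₂) :
    ρ *ᵥ emb1 w k = 0 := by
  have hsum : ∑ m, star (emb1 w m) ⬝ᵥ (ρ *ᵥ emb1 w m) = 0 := by
    rw [← margA_quad, hm, quad_outer, hw, mul_zero]
  have hterm : ∀ m ∈ Finset.univ, (0:ℂ) ≤ star (emb1 w m) ⬝ᵥ (ρ *ᵥ emb1 w m) :=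
    fun m _ => hρ.dotProduct_mulVec_nonneg _
  have hk := (Finset.sum_eq_zero_iff_of_nonneg hterm).mp hsum k (Finset.mem_univ k)
  exact (hρ.dotProduct_mulVec_zero_iff _).mp hk

lemma row_eq_zero (hρ : ρ.PosSemidef) {ψ : Fin d₁ → ℂ} (hm : margA ρ = outer ψ)
    {w : Fin d₁ → ℂ} (hw : ∑ i, conj' (ψ i) * w i = 0) (p : Fin d₁ × Fin d₂) (k : Fin d₂) :
    ∑ j, ρ p (j,k) * w j = 0 := by
  have h0 := congrFun (mulVec_emb1_eq_zero hρ hm hw k) p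
  simp only [Matrix.mulVec, dotProduct, emb1, Fintype.sum_prod_type, mul_ite, mul_zero,
    Finset.sum_ite_irrel, Finset.sum_const_zero, Finset.sum_ite_eq', Finset.mem_univ, if_true,
    Pi.zero_apply] at h0
  exact h0

lemma herm_entry (hρ : ρ.PosSemidef) (p q : Fin d₁ × Fin d₂) :
    conj' (ρ q p) = ρ p q := by
  rw [starRingEnd_apply]
  exact Matrix.IsHermitian.apply hρ.1 p q

lemma colrel (hρ : ρ.PosSemidef) {ψ : Fin d₁ → ℂ} (hψ : ∑ i, conj' (ψ i) * ψ i = 1)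
    (hm : margA ρ = outer ψ) (p : Fin d₁ × Fin d₂) (j : Fin d₁) (k : Fin d₂) :
    ρ p (j,k) = (∑ j', ψ j' * ρ p (j',k)) * conj' (ψ j) := by
  have H : ∀ w : Fin d₁ → ℂ, (∑ i, conj' (ψ i) * w i = 0) →
      ∑ i, conj' ((fun j => conj' (ρ p (j,k))) i) * w i = 0 := by
    intro w hw
    have := row_eq_zero hρ hm hw p k
    simpa [Complex.conj_conj] using this
  have h := span_helper ψ (fun j => conj' (ρ p (j,k))) hψ H j
  have h2 := congrArg conj' h
  simpa [map_mul, map_sum, Complex.conj_conj] using h2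

lemma factor_of_margA_outer (hρ : ρ.PosSemidef) {ψ : Fin d₁ → ℂ}
    (hψ : ∑ i, conj' (ψ i) * ψ i = 1) (hm : margA ρ = outer ψ)
    (i : Fin d₁) (m : Fin d₂) (j : Fin d₁) (k : Fin d₂) :
    ρ (i,m) (j,k) = ψ i * conj' (ψ j) * margB ρ m k := by
  set T : Fin d₂ → Fin d₂ → ℂ :=
    fun m k => ∑ i', conj' (ψ i') * ∑ j', ψ j' * ρ (i',m) (j',k) with hT
  have key : ∀ (i : Fin d₁) (m : Fin d₂) (j : Fin d₁) (k : Fin d₂),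
      ρ (i,m) (j,k) = ψ i * conj' (ψ j) * T m k := by
    intro i m j k
    calc ρ (i,m) (j,k) = conj' (ρ (j,k) (i,m)) := (herm_entry hρ _ _).symm
      _ = conj' ((∑ i', ψ i' * ρ (j,k) (i',m)) * conj' (ψ i)) := by
          rw [← colrel hρ hψ hm (j,k) i m]
      _ = (∑ i', conj' (ψ i') * conj' (ρ (j,k) (i',m))) * ψ i := by
          rw [map_mul, map_sum, Complex.conj_conj]
          congr 1
          exact Finset.sum_congr rfl fun i' _ => by rw [map_mul]
      _ = (∑ i', conj' (ψ i') * ρ (i',m) (j,k)) * ψ i := by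
          congr 1
          exact Finset.sum_congr rfl fun i' _ => by rw [herm_entry hρ]
      _ = (∑ i', conj' (ψ i') * ((∑ j', ψ j' * ρ (i',m) (j',k)) * conj' (ψ j))) * ψ i := by
          congr 1
          exact Finset.sum_congr rfl fun i' _ => by rw [← colrel hρ hψ hm (i',m) j k]
      _ = ψ i * conj' (ψ j) * T m k := by
          rw [hT]
          rw [Finset.sum_congr rfl fun i' (_ : i' ∈ Finset.univ) =>
            show conj' (ψ i') * ((∑ j', ψ j' * ρ (i',m) (j',k)) * conj' (ψ j))
              = (conj' (ψ i') * ∑ j', ψ j' * ρ (i',m) (j',k)) * conj' (ψ j) from by ring]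
          rw [← Finset.sum_mul]
          ring
  have hTB : ∀ (m k : Fin d₂), margB ρ m k = T m k := by
    intro m k
    have h0 : margB ρ m k = ∑ i, ρ (i,m) (i,k) := rfl
    rw [h0, Finset.sum_congr rfl fun i (_ : i ∈ Finset.univ) => key i m i k,
      ← Finset.sum_mul]
    rw [show (∑ i, ψ i * conj' (ψ i)) = ∑ i, conj' (ψ i) * ψ i from
      Finset.sum_congr rfl fun i _ => mul_comm _ _]
    rw [hψ, one_mul]
  rw [key i m j k, hTB m k]

/-- swap the two factors -/
def swapM (σ : Matrix (Fin d₁ × Fin d₂) (Fin d₁ × Fin d₂) ℂ) :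
    Matrix (Fin d₂ × Fin d₁) (Fin d₂ × Fin d₁) ℂ :=
  σ.submatrix Prod.swap Prod.swap

lemma swapM_posSemidef {σ : Matrix (Fin d₁ × Fin d₂) (Fin d₁ × Fin d₂) ℂ}
    (h : σ.PosSemidef) : (swapM σ).PosSemidef := h.submatrix _

lemma margA_swapM (σ : Matrix (Fin d₁ × Fin d₂) (Fin d₁ × Fin d₂) ℂ) :
    margA (swapM σ) = margB σ := rfl

lemma margB_swapM (σ : Matrix (Fin d₁ × Fin d₂) (Fin d₁ × Fin d₂) ℂ) :
    margB (swapM σ) = margA σ := rfl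

lemma swapM_inj {σ τ : Matrix (Fin d₁ × Fin d₂) (Fin d₁ × Fin d₂) ℂ}
    (h : swapM σ = swapM τ) : σ = τ := by
  ext p q
  have := congrFun (congrFun h (p.2, p.1)) (q.2, q.1)
  simpa [swapM] using this

lemma trace_swapM (σ : Matrix (Fin d₁ × Fin d₂) (Fin d₁ × Fin d₂) ℂ) :
    (swapM σ).trace = σ.trace := by
  rw [← trace_margA (swapM σ), margA_swapM, trace_margB]

lemma margB_posSemidef {σ : Matrix (Fin d₁ × Fin d₂) (Fin d₁ × Fin d₂) ℂ}
    (h : σ.PosSemidef) : (margB σ).PosSemidef :=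
  margA_swapM σ ▸ margA_posSemidef (swapM_posSemidef h)

lemma uda_of_margA_rank_one (hpsd : ρ.PosSemidef) (htr : ρ.trace = 1)
    (hr : (margA ρ).rank = 1) :
    ∀ σ : Matrix (Fin d₁ × Fin d₂) (Fin d₁ × Fin d₂) ℂ,
      σ.PosSemidef → σ.trace = 1 → margA σ = margA ρ → margB σ = margB ρ → σ = ρ := by
  obtain ⟨ψ, hψ, hout⟩ := exists_unit_outer (margA_posSemidef hpsd)
    (by rw [trace_margA]; exact htr) hr
  intro σ hσ _ hA hB
  ext p q
  obtain ⟨i, m⟩ := p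
  obtain ⟨j, k⟩ := q
  rw [factor_of_margA_outer hσ hψ (hA.trans hout) i m j k,
    factor_of_margA_outer hpsd hψ hout i m j k, hB]

lemma margA_add (σ τ : Matrix (Fin d₁ × Fin d₂) (Fin d₁ × Fin d₂) ℂ) :
    margA (σ + τ) = margA σ + margA τ := by
  ext i j
  simp [margA, Finset.sum_add_distrib]

lemma margB_add (σ τ : Matrix (Fin d₁ × Fin d₂) (Fin d₁ × Fin d₂) ℂ) :
    margB (σ + τ) = margB σ + margB τ := by
  ext i j
  simp [margB, Finset.sum_add_distrib]

lemma sum_prod_mul (g : Fin d₁ → ℂ) (h : Fin d₂ → ℂ) :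
    ∑ p : Fin d₁ × Fin d₂, g p.1 * h p.2 = (∑ i, g i) * (∑ k, h k) := by
  rw [Fintype.sum_prod_type]
  exact (Finset.sum_mul_sum _ _ _ _).symm

lemma sum_prod_factor (x₁ x₂ : Fin d₁ → ℂ) (z₁ z₂ : Fin d₂ → ℂ) :
    ∑ p : Fin d₁ × Fin d₂, conj' (x₁ p.1 * z₁ p.2) * (x₂ p.1 * z₂ p.2)
      = (∑ i, conj' (x₁ i) * x₂ i) * (∑ k, conj' (z₁ k) * z₂ k) := by
  rw [← sum_prod_mul]
  exact Finset.sum_congr rfl fun p _ => by rw [map_mul]; ring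

/-- the marginal-preserving traceless perturbation -/
def pert (c : ℝ) (u₁ u₂ : Fin d₁ → ℂ) (v₁ v₂ : Fin d₂ → ℂ) :
    Matrix (Fin d₁ × Fin d₂) (Fin d₁ × Fin d₂) ℂ :=
  Matrix.of fun p q => (c : ℂ) * ((u₁ p.1 * v₁ p.2) * conj' (u₂ q.1 * v₂ q.2)
    + (u₂ p.1 * v₂ p.2) * conj' (u₁ q.1 * v₁ q.2))

lemma margA_pert (c : ℝ) (u₁ u₂ : Fin d₁ → ℂ) (v₁ v₂ : Fin d₂ → ℂ)
    (hv12 : ∑ k, conj' (v₁ k) * v₂ k = 0) (hv21 : ∑ k, conj' (v₂ k) * v₁ k = 0) :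
    margA (pert c u₁ u₂ v₁ v₂) = 0 := by
  ext i j
  show (∑ k, pert c u₁ u₂ v₁ v₂ (i,k) (j,k)) = 0
  rw [Finset.sum_congr rfl fun k (_ : k ∈ Finset.univ) =>
    show pert c u₁ u₂ v₁ v₂ (i,k) (j,k)
      = (c:ℂ) * ((u₁ i * conj' (u₂ j)) * (conj' (v₂ k) * v₁ k))
        + (c:ℂ) * ((u₂ i * conj' (u₁ j)) * (conj' (v₁ k) * v₂ k)) from by
      simp only [pert, Matrix.of_apply, map_mul]; ring]
  rw [Finset.sum_add_distrib, ← Finset.mul_sum, ← Finset.mul_sum,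
    ← Finset.mul_sum, ← Finset.mul_sum, hv21, hv12, mul_zero, mul_zero, mul_zero, mul_zero,
    add_zero]

lemma margB_pert (c : ℝ) (u₁ u₂ : Fin d₁ → ℂ) (v₁ v₂ : Fin d₂ → ℂ)
    (hu12 : ∑ i, conj' (u₁ i) * u₂ i = 0) (hu21 : ∑ i, conj' (u₂ i) * u₁ i = 0) :
    margB (pert c u₁ u₂ v₁ v₂) = 0 := by
  ext k l
  show (∑ i, pert c u₁ u₂ v₁ v₂ (i,k) (i,l)) = 0
  rw [Finset.sum_congr rfl fun i (_ : i ∈ Finset.univ) =>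
    show pert c u₁ u₂ v₁ v₂ (i,k) (i,l)
      = (c:ℂ) * ((v₁ k * conj' (v₂ l)) * (conj' (u₂ i) * u₁ i))
        + (c:ℂ) * ((v₂ k * conj' (v₁ l)) * (conj' (u₁ i) * u₂ i)) from by
      simp only [pert, Matrix.of_apply, map_mul]; ring]
  rw [Finset.sum_add_distrib, ← Finset.mul_sum, ← Finset.mul_sum,
    ← Finset.mul_sum, ← Finset.mul_sum, hu21, hu12, mul_zero, mul_zero, mul_zero, mul_zero,
    add_zero]

lemma pert_ne_zero (c : ℝ) (hc : 0 < c) (u₁ u₂ : Fin d₁ → ℂ) (v₁ v₂ : Fin d₂ → ℂ)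
    (hu21 : ∑ i, conj' (u₂ i) * u₁ i = 0) (hv21 : ∑ k, conj' (v₂ k) * v₁ k = 0)
    (hu11 : ∑ i, conj' (u₁ i) * u₁ i = 1) (hu22 : ∑ i, conj' (u₂ i) * u₂ i = 1)
    (hv11 : ∑ k, conj' (v₁ k) * v₁ k = 1) (hv22 : ∑ k, conj' (v₂ k) * v₂ k = 1) :
    pert c u₁ u₂ v₁ v₂ ≠ 0 := by
  set X := pert c u₁ u₂ v₁ v₂ with hX
  set w₁ : Fin d₁ × Fin d₂ → ℂ := fun p => u₁ p.1 * v₁ p.2 with hw₁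
  set w₂ : Fin d₁ × Fin d₂ → ℂ := fun p => u₂ p.1 * v₂ p.2 with hw₂
  have hE : ∑ p : Fin d₁ × Fin d₂, ∑ q : Fin d₁ × Fin d₂, conj' (w₂ p) * (X p q * w₁ q)
      = (c : ℂ) := by
    have step : ∑ p : Fin d₁ × Fin d₂, ∑ q : Fin d₁ × Fin d₂, conj' (w₂ p) * (X p q * w₁ q)
        = (c:ℂ) * ((∑ p : Fin d₁ × Fin d₂, conj' (w₂ p) * w₁ p)
            * (∑ q : Fin d₁ × Fin d₂, conj' (w₂ q) * w₁ q)
          + (∑ p : Fin d₁ × Fin d₂, conj' (w₂ p) * w₂ p)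
            * (∑ q : Fin d₁ × Fin d₂, conj' (w₁ q) * w₁ q)) := by
      rw [Finset.sum_mul_sum, Finset.sum_mul_sum, ← Finset.sum_add_distrib, Finset.mul_sum]
      refine Finset.sum_congr rfl fun p _ => ?_
      rw [← Finset.sum_add_distrib, Finset.mul_sum]
      refine Finset.sum_congr rfl fun q _ => ?_
      simp only [hX, pert, Matrix.of_apply, hw₁, hw₂]
      ring
    rw [step]
    have e21 : ∑ p : Fin d₁ × Fin d₂, conj' (w₂ p) * w₁ p = 0 := by
      rw [show (fun p : Fin d₁ × Fin d₂ => conj' (w₂ p) * w₁ p)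
          = fun p => conj' (u₂ p.1 * v₂ p.2) * (u₁ p.1 * v₁ p.2) from rfl]
      rw [sum_prod_factor, hu21, zero_mul]
    have e22 : ∑ p : Fin d₁ × Fin d₂, conj' (w₂ p) * w₂ p = 1 := by
      rw [show (fun p : Fin d₁ × Fin d₂ => conj' (w₂ p) * w₂ p)
          = fun p => conj' (u₂ p.1 * v₂ p.2) * (u₂ p.1 * v₂ p.2) from rfl]
      rw [sum_prod_factor, hu22, hv22, one_mul]
    have e11 : ∑ p : Fin d₁ × Fin d₂, conj' (w₁ p) * w₁ p = 1 := by
      rw [show (fun p : Fin d₁ × Fin d₂ => conj' (w₁ p) * w₁ p)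
          = fun p => conj' (u₁ p.1 * v₁ p.2) * (u₁ p.1 * v₁ p.2) from rfl]
      rw [sum_prod_factor, hu11, hv11, one_mul]
    rw [e21, e22, e11]
    ring
  intro h0
  rw [h0] at hE
  simp only [Matrix.zero_apply, zero_mul, mul_zero, Finset.sum_const_zero] at hE
  exact (Complex.ofReal_ne_zero.mpr (ne_of_gt hc)) hE.symm

lemma not_uda (hpsd : ρ.PosSemidef) (htr : ρ.trace = 1)
    (hrA : (margA ρ).rank ≠ 1) (hrB : (margB ρ).rank ≠ 1) :
    ∃ σ : Matrix (Fin d₁ × Fin d₂) (Fin d₁ × Fin d₂) ℂ,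
      σ.PosSemidef ∧ σ.trace = 1 ∧ margA σ = margA ρ ∧ margB σ = margB ρ ∧ σ ≠ ρ := by
  have hApsd := margA_posSemidef hpsd
  have hBpsd := margB_posSemidef hpsd
  have hAtr : (margA ρ).trace = 1 := by rw [trace_margA]; exact htr
  have hBtr : (margB ρ).trace = 1 := by rw [trace_margB]; exact htr
  obtain ⟨s₁, s₂, hs, ha₁, ha₂⟩ := exists_two_pos_eigs hApsd hAtr hrA
  obtain ⟨t₁, t₂, ht, hb₁, hb₂⟩ := exists_two_pos_eigs hBpsd hBtr hrB
  have hanneg := hApsd.eigenvalues_nonneg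
  have hbnneg := hBpsd.eigenvalues_nonneg
  -- the eigen-pair vectors
  set w : Fin d₁ × Fin d₂ → Fin d₁ × Fin d₂ → ℂ := fun st p =>
    (Real.sqrt (hApsd.1.eigenvalues st.1 * hBpsd.1.eigenvalues st.2) : ℂ)
      * ((hApsd.1.eigenvectorUnitary : Matrix (Fin d₁) (Fin d₁) ℂ) p.1 st.1
        * (hBpsd.1.eigenvectorUnitary : Matrix (Fin d₂) (Fin d₂) ℂ) p.2 st.2) with hwdef
  set P : Matrix (Fin d₁ × Fin d₂) (Fin d₁ × Fin d₂) ℂ :=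
    Matrix.of (fun p q => margA ρ p.1 q.1 * margB ρ p.2 q.2) with hPdef
  have hPdecomp : P = ∑ st : Fin d₁ × Fin d₂, outer (w st) := by
    ext p q
    rw [Matrix.sum_apply, hPdef]
    simp only [Matrix.of_apply]
    rw [spec_apply hApsd.1 p.1 q.1, spec_apply hBpsd.1 p.2 q.2, Finset.sum_mul_sum,
      Fintype.sum_prod_type]
    refine Finset.sum_congr rfl fun s1 _ => Finset.sum_congr rfl fun t1 _ => ?_
    rw [outer_apply, hwdef]
    simp only [map_mul, Complex.conj_ofReal]
    have hx : ((Real.sqrt (hApsd.1.eigenvalues s1 * hBpsd.1.eigenvalues t1) : ℝ) : ℂ)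
        * ((Real.sqrt (hApsd.1.eigenvalues s1 * hBpsd.1.eigenvalues t1) : ℝ) : ℂ)
        = ((hApsd.1.eigenvalues s1 : ℝ) : ℂ) * ((hBpsd.1.eigenvalues t1 : ℝ) : ℂ) := by
      rw [← Complex.ofReal_mul, Real.mul_self_sqrt (mul_nonneg (hanneg _) (hbnneg _)),
        Complex.ofReal_mul]
    linear_combination (-(hApsd.1.eigenvectorUnitary : Matrix (Fin d₁) (Fin d₁) ℂ) p.1 s1
      * (hBpsd.1.eigenvectorUnitary : Matrix (Fin d₂) (Fin d₂) ℂ) p.2 t1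
      * conj' ((hApsd.1.eigenvectorUnitary : Matrix (Fin d₁) (Fin d₁) ℂ) q.1 s1)
      * conj' ((hBpsd.1.eigenvectorUnitary : Matrix (Fin d₂) (Fin d₂) ℂ) q.2 t1)) * hx
  have hPpsd : P.PosSemidef := by
    rw [hPdecomp]
    exact posSemidef_sum _ _ fun st _ => outer_posSemidef _
  have hPmargA : margA P = margA ρ := by
    ext i j
    show (∑ k, P (i,k) (j,k)) = margA ρ i j
    rw [Finset.sum_congr rfl fun k (_ : k ∈ Finset.univ) =>
      show P (i,k) (j,k) = margA ρ i j * margB ρ k k from rfl]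
    rw [← Finset.mul_sum, show (∑ k, margB ρ k k) = 1 from hBtr, mul_one]
  have hPmargB : margB P = margB ρ := by
    ext k l
    show (∑ i, P (i,k) (i,l)) = margB ρ k l
    rw [Finset.sum_congr rfl fun i (_ : i ∈ Finset.univ) =>
      show P (i,k) (i,l) = margA ρ i i * margB ρ k l from rfl]
    rw [← Finset.sum_mul, show (∑ i, margA ρ i i) = 1 from hAtr, one_mul]
  have hPtr : P.trace = 1 := by
    rw [← trace_margA, hPmargA]; exact hAtr
  by_cases hPρ : P = ρ
  · -- perturbation case
    have horthU := col_orthonormal hApsd.1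
    have horthV := col_orthonormal hBpsd.1
    set u₁ : Fin d₁ → ℂ := fun i => (hApsd.1.eigenvectorUnitary : Matrix (Fin d₁) (Fin d₁) ℂ) i s₁
    set u₂ : Fin d₁ → ℂ := fun i => (hApsd.1.eigenvectorUnitary : Matrix (Fin d₁) (Fin d₁) ℂ) i s₂
    set v₁ : Fin d₂ → ℂ := fun k => (hBpsd.1.eigenvectorUnitary : Matrix (Fin d₂) (Fin d₂) ℂ) k t₁
    set v₂ : Fin d₂ → ℂ := fun k => (hBpsd.1.eigenvectorUnitary : Matrix (Fin d₂) (Fin d₂) ℂ) k t₂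
    have hu11 : ∑ i, conj' (u₁ i) * u₁ i = 1 := by have := horthU s₁ s₁; rwa [if_pos rfl] at this
    have hu22 : ∑ i, conj' (u₂ i) * u₂ i = 1 := by have := horthU s₂ s₂; rwa [if_pos rfl] at this
    have hu12 : ∑ i, conj' (u₁ i) * u₂ i = 0 := by have := horthU s₁ s₂; rwa [if_neg hs] at this
    have hu21 : ∑ i, conj' (u₂ i) * u₁ i = 0 := by
      have := horthU s₂ s₁; rwa [if_neg (Ne.symm hs)] at this
    have hv11 : ∑ k, conj' (v₁ k) * v₁ k = 1 := by have := horthV t₁ t₁; rwa [if_pos rfl] at this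
    have hv22 : ∑ k, conj' (v₂ k) * v₂ k = 1 := by have := horthV t₂ t₂; rwa [if_pos rfl] at this
    have hv12 : ∑ k, conj' (v₁ k) * v₂ k = 0 := by have := horthV t₁ t₂; rwa [if_neg ht] at this
    have hv21 : ∑ k, conj' (v₂ k) * v₁ k = 0 := by
      have := horthV t₂ t₁; rwa [if_neg (Ne.symm ht)] at this
    set α := Real.sqrt (hApsd.1.eigenvalues s₁ * hBpsd.1.eigenvalues t₁) with hα
    set β := Real.sqrt (hApsd.1.eigenvalues s₂ * hBpsd.1.eigenvalues t₂) with hβ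
    have hαpos : 0 < α := Real.sqrt_pos.mpr (mul_pos ha₁ hb₁)
    have hβpos : 0 < β := Real.sqrt_pos.mpr (mul_pos ha₂ hb₂)
    set X := pert (α * β) u₁ u₂ v₁ v₂ with hXdef
    set y : Fin d₁ × Fin d₂ → ℂ := fun p => (α : ℂ) * (u₁ p.1 * v₁ p.2)
      + (β : ℂ) * (u₂ p.1 * v₂ p.2) with hy
    have hne12 : ((s₁, t₁) : Fin d₁ × Fin d₂) ≠ (s₂, t₂) := fun h => hs (congrArg Prod.fst h)
    have h3 : outer (w (s₁,t₁)) + outer (w (s₂,t₂)) + X = outer y := by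
      ext p q
      simp only [Matrix.add_apply, outer_apply, hXdef, pert, Matrix.of_apply, hy, hwdef,
        map_add, map_mul, Complex.conj_ofReal, Complex.ofReal_mul]
      ring
    have hsplit : ρ + X = (∑ st ∈ (Finset.univ \ {(s₁,t₁),(s₂,t₂)} :
        Finset (Fin d₁ × Fin d₂)), outer (w st)) + outer y := by
      calc ρ + X = P + X := by rw [hPρ]
        _ = (∑ st : Fin d₁ × Fin d₂, outer (w st)) + X := by rw [hPdecomp]
        _ = ((∑ st ∈ (Finset.univ \ {(s₁,t₁),(s₂,t₂)} : Finset (Fin d₁ × Fin d₂)), outer (w st))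
            + (outer (w (s₁,t₁)) + outer (w (s₂,t₂)))) + X := by
          rw [← Finset.sum_sdiff (Finset.subset_univ ({(s₁,t₁),(s₂,t₂)} :
            Finset (Fin d₁ × Fin d₂))), Finset.sum_pair hne12]
        _ = _ := by rw [add_assoc, ← h3, add_assoc]
    refine ⟨ρ + X, ?_, ?_, ?_, ?_, ?_⟩
    · rw [hsplit]
      exact (posSemidef_sum _ _ fun st _ => outer_posSemidef _).add (outer_posSemidef y)
    · rw [← trace_margA, margA_add, hXdef, margA_pert _ _ _ _ _ hv12 hv21, add_zero]
      exact hAtr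
    · rw [margA_add, hXdef, margA_pert _ _ _ _ _ hv12 hv21, add_zero]
    · rw [margB_add, hXdef, margB_pert _ _ _ _ _ hu12 hu21, add_zero]
    · intro h
      exact pert_ne_zero (α * β) (mul_pos hαpos hβpos) u₁ u₂ v₁ v₂ hu21 hv21 hu11 hu22 hv11 hv22
        (by rw [← hXdef]; exact add_eq_left.mp h)
  · exact ⟨P, hPpsd, hPtr, hPmargA, hPmargB, hPρ⟩

end bipartite

end BPH

/-- A bipartite state is 1-UDA (uniquely determined among all states by its two
single-system marginals) if and only if at least one of its marginals is pure. -/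
theorem bipartite_oneUDA_iff_pure_marginal {d₁ d₂ : ℕ}
    (ρ : Matrix (Fin d₁ × Fin d₂) (Fin d₁ × Fin d₂) ℂ)
    (hpsd : ρ.PosSemidef) (htr : ρ.trace = 1) :
    (∀ σ : Matrix (Fin d₁ × Fin d₂) (Fin d₁ × Fin d₂) ℂ,
        σ.PosSemidef → σ.trace = 1 → margA σ = margA ρ → margB σ = margB ρ → σ = ρ) ↔
      ((margA ρ).rank = 1 ∨ (margB ρ).rank = 1) := by
  constructor
  · intro huda
    by_contra hnot
    push_neg at hnot
    obtain ⟨hrA, hrB⟩ := hnot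
    obtain ⟨σ, h1, h2, h3, h4, h5⟩ := BPH.not_uda hpsd htr hrA hrB
    exact h5 (huda σ h1 h2 h3 h4)
  · rintro (hr | hr)
    · exact BPH.uda_of_margA_rank_one hpsd htr hr
    · intro σ hσ hσtr hA hB
      refine BPH.swapM_inj (BPH.uda_of_margA_rank_one (ρ := BPH.swapM ρ)
        (BPH.swapM_posSemidef hpsd) (by rw [BPH.trace_swapM]; exact htr)
        (by rw [BPH.margA_swapM]; exact hr) (BPH.swapM σ) (BPH.swapM_posSemidef hσ)
        (by rw [BPH.trace_swapM]; exact hσtr) ?_ ?_)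
      · rw [BPH.margA_swapM, BPH.margA_swapM]; exact hB
      · rw [BPH.margB_swapM, BPH.margB_swapM]; exact hA
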